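/- Let a_1, b_1, ..., a_n, b_n be points in R^k, and suppose each half-ball of the segment a_i b_i with radius alpha*|a_i - b_i| (centered at the midpoint m_i = (a_i+b_i)/2, oriented toward the origin) is contained in the ball of radius R around the origin, and that every point of R^k belongs to at most t of these open half-balls. Then sum_{i=1}^n (alpha*|a_i - b_i|)^k <= 2t * R^k. -/

import Mathlib

open scoped RealInnerProductSpace Classical

/-- The open half-ball of the segment `ab` with radius `α * ‖a - b‖`, centered at the
midpoint of `ab` and oriented towards the origin (when the midpoint is the origin itself,
it consists of the points of the ball with negative first coordinate). -/
def halfBall {k : ℕ} (α : ℝ) (a b : EuclideanSpace ℝ (Fin k)) :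
    Set (EuclideanSpace ℝ (Fin k)) :=
  {x | ‖x - midpoint ℝ a b‖ < α * ‖a - b‖ ∧
    (midpoint ℝ a b ≠ 0 → ⟪x, midpoint ℝ a b⟫ < ‖midpoint ℝ a b‖ ^ 2) ∧
    (midpoint ℝ a b = 0 → ∀ h : 0 < k, x ⟨0, h⟩ < 0)}

open MeasureTheory Metric in
lemma halfSet_isOpen {k : ℕ} (hk : 0 < k) (m : EuclideanSpace ℝ (Fin k)) (r : ℝ) :
    IsOpen {x : EuclideanSpace ℝ (Fin k) | ‖x - m‖ < r ∧
      (m ≠ 0 → ⟪x, m⟫ < ‖m‖ ^ 2) ∧ (m = 0 → ∀ h : 0 < k, x ⟨0, h⟩ < 0)} := by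
  by_cases hm : m = 0
  · subst hm
    have : {x : EuclideanSpace ℝ (Fin k) | ‖x - 0‖ < r ∧
        ((0 : EuclideanSpace ℝ (Fin k)) ≠ 0 → ⟪x, (0 : EuclideanSpace ℝ (Fin k))⟫ < ‖(0 : EuclideanSpace ℝ (Fin k))‖ ^ 2) ∧
        ((0 : EuclideanSpace ℝ (Fin k)) = 0 → ∀ h : 0 < k, x ⟨0, h⟩ < 0)}
        = ball (0 : EuclideanSpace ℝ (Fin k)) r ∩ {x | x ⟨0, hk⟩ < 0} := by
      ext x
      rw [Set.mem_setOf_eq, Set.mem_inter_iff, mem_ball_iff_norm, Set.mem_setOf_eq]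
      constructor
      · rintro ⟨h1, _, h3⟩; exact ⟨h1, h3 rfl hk⟩
      · rintro ⟨h1, h2⟩; exact ⟨h1, fun h => absurd rfl h, fun _ _ => h2⟩
    rw [this]
    exact isOpen_ball.inter
      (isOpen_lt (EuclideanSpace.proj (⟨0, hk⟩ : Fin k)).continuous continuous_const)
  · have : {x : EuclideanSpace ℝ (Fin k) | ‖x - m‖ < r ∧
        (m ≠ 0 → ⟪x, m⟫ < ‖m‖ ^ 2) ∧ (m = 0 → ∀ h : 0 < k, x ⟨0, h⟩ < 0)}
        = ball m r ∩ {x | ⟪x, m⟫ < ‖m‖ ^ 2} := by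
      ext x
      rw [Set.mem_setOf_eq, Set.mem_inter_iff, mem_ball_iff_norm, Set.mem_setOf_eq]
      constructor
      · rintro ⟨h1, h2, _⟩; exact ⟨h1, h2 hm⟩
      · rintro ⟨h1, h2⟩; exact ⟨h1, fun _ => h2, fun h => absurd h hm⟩
    rw [this]
    exact isOpen_ball.inter
      (isOpen_lt (Continuous.inner continuous_id continuous_const) continuous_const)

open MeasureTheory Metric in
lemma halfSet_volume {k : ℕ} (hk : 0 < k) (m : EuclideanSpace ℝ (Fin k)) (r : ℝ) :
    volume (ball m r) ≤ 2 * volume {x : EuclideanSpace ℝ (Fin k) | ‖x - m‖ < r ∧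
      (m ≠ 0 → ⟪x, m⟫ < ‖m‖ ^ 2) ∧ (m = 0 → ∀ h : 0 < k, x ⟨0, h⟩ < 0)} := by
  set H := {x : EuclideanSpace ℝ (Fin k) | ‖x - m‖ < r ∧
      (m ≠ 0 → ⟪x, m⟫ < ‖m‖ ^ 2) ∧ (m = 0 → ∀ h : 0 < k, x ⟨0, h⟩ < 0)} with hH
  have hmeas : MeasurableSet H := (halfSet_isOpen hk m r).measurableSet
  have hrefl : volume ((fun x => (m + m) - x) ⁻¹' H) = volume H :=
    (Measure.measurePreserving_sub_left volume (m + m)).measure_preimage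
      hmeas.nullMeasurableSet
  have hnorm : ∀ x : EuclideanSpace ℝ (Fin k), ‖(m + m) - x - m‖ = ‖x - m‖ := by
    intro x
    have : (m + m) - x - m = -(x - m) := by abel
    rw [this, norm_neg]
  by_cases hm : m = 0
  · subst hm
    set Z := {x : EuclideanSpace ℝ (Fin k) | x ⟨0, hk⟩ = 0} with hZ
    have hZ0 : volume Z = 0 := by
      have h1 : Z = (LinearMap.ker
          (EuclideanSpace.proj (𝕜 := ℝ) (⟨0, hk⟩ : Fin k)).toLinearMap : Set _) := by
        ext x; simp [hZ, LinearMap.mem_ker]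
      rw [h1]
      refine Measure.addHaar_submodule _ _ ?_
      intro h
      have : EuclideanSpace.single (⟨0, hk⟩ : Fin k) (1 : ℝ) ∈ LinearMap.ker
          (EuclideanSpace.proj (𝕜 := ℝ) (⟨0, hk⟩ : Fin k)).toLinearMap := h ▸ Submodule.mem_top
      simp [LinearMap.mem_ker] at this
    have hsub : ball (0 : EuclideanSpace ℝ (Fin k)) r
        ⊆ H ∪ (fun x => ((0 : EuclideanSpace ℝ (Fin k)) + 0) - x) ⁻¹' H ∪ Z := by
      intro x hx
      rw [mem_ball_iff_norm] at hx
      rcases lt_trichotomy (x ⟨0, hk⟩) 0 with h | h | h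
      · exact Or.inl (Or.inl ⟨hx, fun h0 => absurd rfl h0, fun _ _ => h⟩)
      · exact Or.inr h
      · refine Or.inl (Or.inr ?_)
        refine ⟨by rw [hnorm]; exact hx, fun h0 => absurd rfl h0, fun _ _ => ?_⟩
        show ((0 : EuclideanSpace ℝ (Fin k)) + 0 - x) ⟨0, hk⟩ < 0
        simpa using h
    calc volume (ball (0 : EuclideanSpace ℝ (Fin k)) r)
        ≤ volume (H ∪ (fun x => ((0 : EuclideanSpace ℝ (Fin k)) + 0) - x) ⁻¹' H ∪ Z) :=
          measure_mono hsub
      _ ≤ volume (H ∪ (fun x => ((0 : EuclideanSpace ℝ (Fin k)) + 0) - x) ⁻¹' H) + volume Z :=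
          measure_union_le _ _
      _ ≤ volume H + volume ((fun x => ((0 : EuclideanSpace ℝ (Fin k)) + 0) - x) ⁻¹' H)
            + volume Z := by gcongr; exact measure_union_le _ _
      _ = 2 * volume H := by rw [hrefl, hZ0, add_zero, two_mul]
  · set Z := {x : EuclideanSpace ℝ (Fin k) | ⟪x, m⟫ = ‖m‖ ^ 2} with hZdef
    have hZ0 : volume Z = 0 := by
      have h1 : Z = (fun x => x + (-m)) ⁻¹'
          ((ℝ ∙ m)ᗮ : Submodule ℝ (EuclideanSpace ℝ (Fin k))) := by
        ext x
        simp only [hZdef, Set.mem_setOf_eq, Set.mem_preimage, SetLike.mem_coe,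
          Submodule.mem_orthogonal_singleton_iff_inner_right]
        rw [← sub_eq_add_neg, inner_sub_right, real_inner_self_eq_norm_sq, sub_eq_zero,
          real_inner_comm]
      rw [h1, measure_preimage_add_right]
      refine Measure.addHaar_submodule _ _ ?_
      intro h
      have h2 : m ∈ (ℝ ∙ m)ᗮ := h ▸ Submodule.mem_top
      have h3 := h2 m (Submodule.mem_span_singleton_self m)
      rw [real_inner_self_eq_norm_sq] at h3
      exact hm (by simpa [pow_eq_zero_iff] using h3)
    have hsub : ball m r ⊆ H ∪ (fun x => (m + m) - x) ⁻¹' H ∪ Z := by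
      intro x hx
      rw [mem_ball_iff_norm] at hx
      rcases lt_trichotomy (⟪x, m⟫) (‖m‖ ^ 2) with h | h | h
      · exact Or.inl (Or.inl ⟨hx, fun _ => h, fun h0 => absurd h0 hm⟩)
      · exact Or.inr h
      · refine Or.inl (Or.inr ?_)
        refine ⟨by rw [hnorm]; exact hx, fun _ => ?_, fun h0 => absurd h0 hm⟩
        have : ⟪(m + m) - x, m⟫ = ‖m‖ ^ 2 + ‖m‖ ^ 2 - ⟪x, m⟫ := by
          rw [inner_sub_left, inner_add_left, real_inner_self_eq_norm_sq]
        rw [this]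
        linarith
    calc volume (ball m r)
        ≤ volume (H ∪ (fun x => (m + m) - x) ⁻¹' H ∪ Z) := measure_mono hsub
      _ ≤ volume (H ∪ (fun x => (m + m) - x) ⁻¹' H) + volume Z := measure_union_le _ _
      _ ≤ volume H + volume ((fun x => (m + m) - x) ⁻¹' H) + volume Z := by
          gcongr; exact measure_union_le _ _
      _ = 2 * volume H := by rw [hrefl, hZ0, add_zero, two_mul]

open MeasureTheory Metric ENNReal in
theorem halfBall_volume_packing (k n t : ℕ) (hk : 0 < k) (ht : 1 ≤ t)
    (α R : ℝ) (hα : 0 ≤ α) (hR : 0 ≤ R)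
    (a b : Fin n → EuclideanSpace ℝ (Fin k))
    (hsub : ∀ i, halfBall α (a i) (b i) ⊆ Metric.ball (0 : EuclideanSpace ℝ (Fin k)) R)
    (hfold : ∀ x : EuclideanSpace ℝ (Fin k),
      (Finset.univ.filter fun i => x ∈ halfBall α (a i) (b i)).card ≤ t) :
    ∑ i, (α * ‖a i - b i‖) ^ k ≤ 2 * t * R ^ k := by
  haveI : Nonempty (Fin k) := ⟨⟨0, hk⟩⟩
  haveI : Nontrivial (EuclideanSpace ℝ (Fin k)) := inferInstance
  set H : Fin n → Set (EuclideanSpace ℝ (Fin k)) := fun i => halfBall α (a i) (b i) with hHdef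
  set r : Fin n → ℝ := fun i => α * ‖a i - b i‖ with hrdef
  have hr : ∀ i, 0 ≤ r i := fun i => mul_nonneg hα (norm_nonneg _)
  have hfk : Module.finrank ℝ (EuclideanSpace ℝ (Fin k)) = k := finrank_euclideanSpace_fin
  have hmeas : ∀ i, MeasurableSet (H i) :=
    fun i => (halfSet_isOpen hk (midpoint ℝ (a i) (b i)) (r i)).measurableSet
  -- half-ball volume bound
  have hhalf : ∀ i, volume (ball (midpoint ℝ (a i) (b i)) (r i)) ≤ 2 * volume (H i) :=
    fun i => halfSet_volume hk (midpoint ℝ (a i) (b i)) (r i)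
  -- packing bound
  have hkey : ∑ i, volume (H i) ≤ (t : ℝ≥0∞) * volume (ball (0 : EuclideanSpace ℝ (Fin k)) R) := by
    calc ∑ i, volume (H i) = ∑ i, ∫⁻ x, (H i).indicator 1 x := by
          refine Finset.sum_congr rfl fun i _ => ?_
          rw [lintegral_indicator_one (hmeas i)]
      _ = ∫⁻ x, ∑ i, (H i).indicator 1 x :=
          (lintegral_finset_sum _ fun i _ => measurable_one.indicator (hmeas i)).symm
      _ ≤ ∫⁻ x, (ball (0 : EuclideanSpace ℝ (Fin k)) R).indicator (fun _ => (t : ℝ≥0∞)) x := by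
          refine lintegral_mono fun x => ?_
          by_cases hx : x ∈ ball (0 : EuclideanSpace ℝ (Fin k)) R
          · rw [Set.indicator_of_mem hx]
            have : ∑ i, (H i).indicator (1 : EuclideanSpace ℝ (Fin k) → ℝ≥0∞) x
                = ((Finset.univ.filter fun i => x ∈ H i).card : ℝ≥0∞) := by
              simp only [Set.indicator_apply, Pi.one_apply]
              rw [Finset.sum_boole]
            rw [this]
            exact (Nat.cast_le (α := ℝ≥0∞)).mpr (hfold x)
          · rw [Set.indicator_of_notMem hx]
            have : ∀ i, (H i).indicator (1 : EuclideanSpace ℝ (Fin k) → ℝ≥0∞) x = 0 := fun i =>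
              Set.indicator_of_notMem (fun h => hx (hsub i h)) _
            simp [this]
      _ = (t : ℝ≥0∞) * volume (ball (0 : EuclideanSpace ℝ (Fin k)) R) := by
          rw [lintegral_indicator_const measurableSet_ball]
  -- set c := volume of unit ball
  set c : ℝ≥0∞ := volume (ball (0 : EuclideanSpace ℝ (Fin k)) 1) with hcdef
  have hc0 : c ≠ 0 := (measure_ball_pos volume (0 : EuclideanSpace ℝ (Fin k)) one_pos).ne'
  have hctop : c ≠ ⊤ := measure_ball_lt_top.ne
  have hchain : ENNReal.ofReal (∑ i, (r i) ^ k) * c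
      ≤ ENNReal.ofReal (2 * t * R ^ k) * c := by
    calc ENNReal.ofReal (∑ i, (r i) ^ k) * c
        = ∑ i, ENNReal.ofReal ((r i) ^ k) * c := by
          rw [ENNReal.ofReal_sum_of_nonneg fun i _ => pow_nonneg (hr i) k, Finset.sum_mul]
      _ = ∑ i, volume (ball (midpoint ℝ (a i) (b i)) (r i)) := by
          refine Finset.sum_congr rfl fun i _ => ?_
          rw [Measure.addHaar_ball volume _ (hr i), hfk]
      _ ≤ ∑ i, 2 * volume (H i) := Finset.sum_le_sum fun i _ => hhalf i
      _ = 2 * ∑ i, volume (H i) := by rw [Finset.mul_sum]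
      _ ≤ 2 * ((t : ℝ≥0∞) * volume (ball (0 : EuclideanSpace ℝ (Fin k)) R)) := by gcongr
      _ = 2 * ((t : ℝ≥0∞) * (ENNReal.ofReal (R ^ k) * c)) := by
          rw [Measure.addHaar_ball volume _ hR, hfk]
      _ = ENNReal.ofReal (2 * t * R ^ k) * c := by
          rw [ENNReal.ofReal_mul (by positivity), ENNReal.ofReal_mul (by norm_num),
            ENNReal.ofReal_natCast]
          norm_num
          ring
  have h2 : ENNReal.ofReal (∑ i, (r i) ^ k) ≤ ENNReal.ofReal (2 * t * R ^ k) :=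
    (ENNReal.mul_le_mul_iff_left hc0 hctop).mp hchain
  have h3 := (ENNReal.ofReal_le_ofReal_iff (by positivity)).mp h2
  exact h3
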